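/- Let A, B, C be a triangle, F, D, E the midpoints of sides BC, CA, AB respectively, and G the circumcenter of triangle FDE. If G lies on the internal bisector of angle ACB (G ≠ C, ∠ACG = ∠GCB, and ∠ACG + ∠GCB = ∠ACB) and dist B C ≠ dist A C, then ∠ACB = π/3. -/

import Mathlib

open EuclideanGeometry Real
open scoped RealInnerProductSpace

theorem stmt_18 (A B C F D E G : EuclideanSpace ℝ (Fin 2))
    (hABC : ¬ Collinear ℝ ({A, B, C} : Set (EuclideanSpace ℝ (Fin 2))))
    (hF : F = midpoint ℝ B C) (hD : D = midpoint ℝ C A) (hE : E = midpoint ℝ A B)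
    (hG₁ : dist G F = dist G D) (hG₂ : dist G D = dist G E)
    (hGC : G ≠ C) (h1 : ∠ A C G = ∠ G C B) (h2 : ∠ A C G + ∠ G C B = ∠ A C B)
    (hne : dist B C ≠ dist A C) :
    ∠ A C B = π / 3 := by
  have hAC : A ≠ C := by
    rintro rfl
    exact hABC (by simpa [Set.insert_comm, Set.pair_comm] using collinear_pair ℝ B A)
  have hBC : B ≠ C := by
    rintro rfl
    exact hABC (by simpa [Set.insert_comm, Set.pair_comm] using collinear_pair ℝ A B)
  set a : EuclideanSpace ℝ (Fin 2) := A - C with ha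
  set b : EuclideanSpace ℝ (Fin 2) := B - C with hb
  set g : EuclideanSpace ℝ (Fin 2) := G - C with hg
  have hpa : a ≠ 0 := sub_ne_zero.mpr hAC
  have hpb : b ≠ 0 := sub_ne_zero.mpr hBC
  have hpg : g ≠ 0 := sub_ne_zero.mpr hGC
  have hpa' : ‖a‖ ≠ 0 := norm_ne_zero_iff.mpr hpa
  have hpb' : ‖b‖ ≠ 0 := norm_ne_zero_iff.mpr hpb
  have hpg' : ‖g‖ ≠ 0 := norm_ne_zero_iff.mpr hpg
  -- rewrite the midpoints
  have hGF : G - F = g - (2⁻¹:ℝ) • b := by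
    rw [hF, midpoint_eq_smul_add, invOf_eq_inv, hg, hb]; module
  have hGD : G - D = g - (2⁻¹:ℝ) • a := by
    rw [hD, midpoint_eq_smul_add, invOf_eq_inv, hg, ha]; module
  have hGE : G - E = g - (2⁻¹:ℝ) • (a + b) := by
    rw [hE, midpoint_eq_smul_add, invOf_eq_inv, hg, ha, hb]; module
  have expand : ∀ x : EuclideanSpace ℝ (Fin 2),
      ‖g - (2⁻¹:ℝ) • x‖ ^ 2 = ‖g‖^2 - (inner ℝ g (x) : ℝ) + 4⁻¹ * ‖x‖^2 := by
    intro x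
    rw [norm_sub_sq_real, inner_smul_right, norm_smul, Real.norm_eq_abs,
      abs_of_pos (by norm_num : (0:ℝ) < 2⁻¹)]
    ring
  have sq1 : ‖G - F‖^2 = ‖G - D‖^2 := by rw [← dist_eq_norm, ← dist_eq_norm, hG₁]
  have sq2 : ‖G - D‖^2 = ‖G - E‖^2 := by rw [← dist_eq_norm, ← dist_eq_norm, hG₂]
  rw [hGF, hGD, expand, expand] at sq1
  rw [hGD, hGE, expand, expand] at sq2
  have habn : ‖a + b‖^2 = ‖a‖^2 + 2 * (inner ℝ a (b) : ℝ) + ‖b‖^2 := norm_add_sq_real a b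
  have hib : (inner ℝ g (a + b) : ℝ) = (inner ℝ g (a) : ℝ) + (inner ℝ g (b) : ℝ) := inner_add_right g a b
  -- inner products with g
  have hgb : (inner ℝ g (b) : ℝ) = 4⁻¹ * (‖b‖^2 + 2 * (inner ℝ a (b) : ℝ)) := by
    rw [hib, habn] at sq2; linarith
  have hga : (inner ℝ g (a) : ℝ) = 4⁻¹ * (‖a‖^2 + 2 * (inner ℝ a (b) : ℝ)) := by linarith
  -- bisector condition
  have hang : ∠ A C G = InnerProductGeometry.angle a g := by
    rw [EuclideanGeometry.angle, ha, hg]; simp [vsub_eq_sub]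
  have hang2 : ∠ G C B = InnerProductGeometry.angle g b := by
    rw [EuclideanGeometry.angle, hg, hb]; simp [vsub_eq_sub]
  have hcos : (inner ℝ a (g) : ℝ) / (‖a‖ * ‖g‖) = (inner ℝ g (b) : ℝ) / (‖g‖ * ‖b‖) := by
    rw [← InnerProductGeometry.cos_angle, ← InnerProductGeometry.cos_angle,
      ← hang, ← hang2, h1]
  rw [real_inner_comm g a] at hcos
  have hcos' : (inner ℝ g (a) : ℝ) * (‖g‖ * ‖b‖) = (inner ℝ g (b) : ℝ) * (‖a‖ * ‖g‖) :=
    (div_eq_div_iff (mul_ne_zero hpa' hpg') (mul_ne_zero hpg' hpb')).mp hcos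
  have hkey : (inner ℝ g (a) : ℝ) * ‖b‖ = (inner ℝ g (b) : ℝ) * ‖a‖ := by
    apply mul_right_cancel₀ hpg'
    linear_combination hcos'
  have hnepq : ‖a‖ ≠ ‖b‖ := by
    rw [dist_eq_norm, dist_eq_norm] at hne
    intro h; exact hne (by rw [← hb, ← ha, h])
  have hs : (inner ℝ a (b) : ℝ) = 2⁻¹ * (‖a‖ * ‖b‖) := by
    rw [hga, hgb] at hkey
    have h4 : (‖a‖ - ‖b‖) * (‖a‖ * ‖b‖ - 2 * (inner ℝ a (b) : ℝ)) = 0 := by linear_combination 4 * hkey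
    rcases mul_eq_zero.mp h4 with h | h
    · exact absurd (by linarith) hnepq
    · linarith
  have hangACB : ∠ A C B = InnerProductGeometry.angle a b := by
    rw [EuclideanGeometry.angle, ha, hb]; simp [vsub_eq_sub]
  have hcosACB : Real.cos (∠ A C B) = 1/2 := by
    rw [hangACB, InnerProductGeometry.cos_angle, hs]
    field_simp
  have hpi := Real.pi_pos
  have h03 : π/3 ∈ Set.Icc 0 π := ⟨by linarith, by linarith⟩
  have hmem : ∠ A C B ∈ Set.Icc 0 π :=
    ⟨EuclideanGeometry.angle_nonneg _ _ _, EuclideanGeometry.angle_le_pi _ _ _⟩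
  exact Real.injOn_cos hmem h03 (by rw [hcosACB, Real.cos_pi_div_three])
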